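/- Let G be a finite group and p the smallest prime divisor of |G|. If P_G(X) is a proper subgroup of G for all X ∈ L(G) − L(P(G)), then pd(G) ≤ 1/p + ((p−1)·|L(P(G))|)/(p·|L(G)|). -/

import Mathlib

open scoped Pointwise

def permutizer {G : Type*} [Group G] (X : Subgroup G) : Subgroup G :=
  Subgroup.closure {g : G |
    (Subgroup.zpowers g : Set G) * (X : Set G) = (X : Set G) * (Subgroup.zpowers g : Set G)}

noncomputable def pd (G : Type*) [Group G] : ℚ :=
  (∑ᶠ X : Subgroup G, (Nat.card ↥(permutizer X) : ℚ)) /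
    ((Nat.card G : ℚ) * (Nat.card (Subgroup G) : ℚ))

noncomputable def PP (G : Type*) [Group G] : Subgroup G :=
  ⨅ H : Subgroup G, permutizer H

theorem pd_upper_bound (G : Type*) [Group G] [Finite G] (p : ℕ)
    (hp : p.Prime) (hdvd : p ∣ Nat.card G)
    (hmin : ∀ q : ℕ, q.Prime → q ∣ Nat.card G → p ≤ q)
    (hproper : ∀ X : Subgroup G, ¬ X ≤ PP G → permutizer X ≠ ⊤) :
    pd G ≤ 1 / (p : ℚ) +
      ((p : ℚ) - 1) * (Nat.card {X : Subgroup G // X ≤ PP G} : ℚ) /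
        ((p : ℚ) * (Nat.card (Subgroup G) : ℚ)) := by
  classical
  haveI : Fintype (Subgroup G) := Fintype.ofFinite _
  have hN0 : 0 < Nat.card G := Nat.card_pos
  have hp0 : (0:ℚ) < p := by exact_mod_cast hp.pos
  -- pointwise bound
  have key : ∀ X : Subgroup G, (p : ℚ) * (Nat.card (permutizer X) : ℚ) ≤
      (if X ≤ PP G then (p : ℚ) * (Nat.card G : ℚ) else (Nat.card G : ℚ)) := by
    intro X
    by_cases h : X ≤ PP G
    · rw [if_pos h]
      have h1 : Nat.card (permutizer X) ≤ Nat.card G :=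
        Nat.le_of_dvd hN0 (Subgroup.card_subgroup_dvd_card _)
      have h2 : (Nat.card (permutizer X) : ℚ) ≤ (Nat.card G : ℚ) := by exact_mod_cast h1
      nlinarith
    · rw [if_neg h]
      have hne := hproper X h
      have hidx1 : (permutizer X).index ≠ 1 := by
        simpa [Subgroup.index_eq_one] using hne
      have hidx0 : (permutizer X).index ≠ 0 := Subgroup.index_ne_zero_of_finite
      have hq : p ≤ (permutizer X).index := by
        have hqp := Nat.minFac_prime hidx1
        have hd : (permutizer X).index.minFac ∣ Nat.card G :=
          dvd_trans (Nat.minFac_dvd _) (Subgroup.index_dvd_card _)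
        exact le_trans (hmin _ hqp hd) (Nat.minFac_le (Nat.pos_of_ne_zero hidx0))
      have hmul : Nat.card (permutizer X) * (permutizer X).index = Nat.card G :=
        Subgroup.card_mul_index _
      have hb : p * Nat.card (permutizer X) ≤ Nat.card G := by
        calc p * Nat.card (permutizer X)
            ≤ (permutizer X).index * Nat.card (permutizer X) :=
              Nat.mul_le_mul_right _ hq
          _ = Nat.card G := by rw [mul_comm]; exact hmul
      exact_mod_cast hb
  set m : ℕ := Nat.card {X : Subgroup G // X ≤ PP G} with hm
  set n : ℕ := Nat.card (Subgroup G) with hn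
  have hn0 : 0 < n := Nat.card_pos
  have hmn : m ≤ n := by
    rw [hm, hn, Nat.card_eq_fintype_card, Nat.card_eq_fintype_card]
    exact Fintype.card_subtype_le _
  -- sum bound
  set S : ℚ := ∑ᶠ X : Subgroup G, (Nat.card (permutizer X) : ℚ) with hS
  have hSsum : S = ∑ X : Subgroup G, (Nat.card (permutizer X) : ℚ) :=
    finsum_eq_sum_of_fintype _
  have hS0 : 0 ≤ S := by
    rw [hSsum]; exact Finset.sum_nonneg fun X _ => by positivity
  have hfilter : (Finset.univ.filter (fun X : Subgroup G => X ≤ PP G)).card = m := by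
    rw [hm, Nat.card_eq_fintype_card, Fintype.card_subtype]
  have hsum : (p : ℚ) * S ≤ m * ((p:ℚ) * Nat.card G) + ((n:ℚ) - m) * Nat.card G := by
    rw [hSsum, Finset.mul_sum]
    calc ∑ X : Subgroup G, (p:ℚ) * (Nat.card (permutizer X) : ℚ)
        ≤ ∑ X : Subgroup G,
            (if X ≤ PP G then (p : ℚ) * (Nat.card G : ℚ) else (Nat.card G : ℚ)) :=
          Finset.sum_le_sum fun X _ => key X
      _ = m * ((p:ℚ) * Nat.card G) + ((n:ℚ) - m) * Nat.card G := by
          rw [Finset.sum_ite, Finset.sum_const, Finset.sum_const, hfilter,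
            Finset.filter_not, Finset.card_sdiff_of_subset (Finset.filter_subset _ _), hfilter]
          have : (Finset.univ : Finset (Subgroup G)).card = n := by
            rw [hn, Nat.card_eq_fintype_card]; rfl
          rw [this]
          simp only [nsmul_eq_mul, Nat.cast_sub hmn]
  -- finish
  rw [pd]
  rw [div_le_iff₀ (by positivity)]
  have expand : ((1:ℚ) / p + ((p:ℚ) - 1) * m / ((p:ℚ) * n)) * ((Nat.card G : ℚ) * n)
      = (Nat.card G : ℚ) * n / p + ((p:ℚ)-1) * m * Nat.card G / p := by
    field_simp
  have hmq : (m:ℚ) ≤ (n:ℚ) := by exact_mod_cast hmn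
  have hG0 : (0:ℚ) < Nat.card G := by exact_mod_cast hN0
  show S ≤ ((1:ℚ)/p + ((p:ℚ)-1)*m/((p:ℚ)*n)) * ((Nat.card G : ℚ) * n)
  rw [expand, ← add_div, le_div_iff₀ hp0]
  nlinarith [hsum]
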